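/- Let U = {(x,y,t) ∈ ℝ³ : y² − 4xt > 0} and define H(x,y,t) = (y² − 4xt)^{−1/2} on U. Then H satisfies both differential constraints on U: the nonlinear constraint H_{xx} H_y − H_{xy} H_x = 0 and the wave equation H_{xt} − H_{yy} = 0. -/

import Mathlib

/-- Partial derivative of `f : ℝ³ → ℝ` in direction `v`, as a function. -/
noncomputable def pd (v : ℝ × ℝ × ℝ) (f : ℝ × ℝ × ℝ → ℝ) : ℝ × ℝ × ℝ → ℝ :=
  fun q => fderiv ℝ f q v

/-- ∂/∂x for functions of (x, y, t). -/
noncomputable def px : (ℝ × ℝ × ℝ → ℝ) → ℝ × ℝ × ℝ → ℝ := pd (1, 0, 0)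
/-- ∂/∂y for functions of (x, y, t). -/
noncomputable def py : (ℝ × ℝ × ℝ → ℝ) → ℝ × ℝ × ℝ → ℝ := pd (0, 1, 0)
/-- ∂/∂t for functions of (x, y, t). -/
noncomputable def pt : (ℝ × ℝ × ℝ → ℝ) → ℝ × ℝ × ℝ → ℝ := pd (0, 0, 1)



noncomputable section AuxStmt2

open ContinuousLinearMap

/-- The quadratic form `Q(x,y,t) = y² - 4xt`. -/
def Qf : ℝ × ℝ × ℝ → ℝ := fun q => q.2.1 ^ 2 - 4 * q.1 * q.2.2

def Px : ℝ × ℝ × ℝ →L[ℝ] ℝ := ContinuousLinearMap.fst ℝ ℝ (ℝ × ℝ)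
def Py : ℝ × ℝ × ℝ →L[ℝ] ℝ :=
  (ContinuousLinearMap.fst ℝ ℝ ℝ).comp (ContinuousLinearMap.snd ℝ ℝ (ℝ × ℝ))
def Pt : ℝ × ℝ × ℝ →L[ℝ] ℝ :=
  (ContinuousLinearMap.snd ℝ ℝ ℝ).comp (ContinuousLinearMap.snd ℝ ℝ (ℝ × ℝ))

@[simp] lemma Px_apply (v : ℝ × ℝ × ℝ) : Px v = v.1 := rfl
@[simp] lemma Py_apply (v : ℝ × ℝ × ℝ) : Py v = v.2.1 := rfl
@[simp] lemma Pt_apply (v : ℝ × ℝ × ℝ) : Pt v = v.2.2 := rfl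

/-- The differential of `Q`. -/
def DQ (q : ℝ × ℝ × ℝ) : ℝ × ℝ × ℝ →L[ℝ] ℝ :=
  (2 * q.2.1) • Py - ((4 * q.2.2) • Px + (4 * q.1) • Pt)

@[simp] lemma DQ_apply (q v : ℝ × ℝ × ℝ) :
    DQ q v = 2 * q.2.1 * v.2.1 - (4 * q.2.2 * v.1 + 4 * q.1 * v.2.2) := by
  simp [DQ]

lemma hasFDerivAt_x (q : ℝ × ℝ × ℝ) : HasFDerivAt (fun p : ℝ × ℝ × ℝ => p.1) Px q :=
  hasFDerivAt_fst
lemma hasFDerivAt_y (q : ℝ × ℝ × ℝ) : HasFDerivAt (fun p : ℝ × ℝ × ℝ => p.2.1) Py q :=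
  hasFDerivAt_fst.comp q hasFDerivAt_snd
lemma hasFDerivAt_t (q : ℝ × ℝ × ℝ) : HasFDerivAt (fun p : ℝ × ℝ × ℝ => p.2.2) Pt q :=
  hasFDerivAt_snd.comp q hasFDerivAt_snd

lemma hasFDerivAt_Qf (q : ℝ × ℝ × ℝ) : HasFDerivAt Qf (DQ q) q := by
  have hy2 : HasFDerivAt (fun p : ℝ × ℝ × ℝ => p.2.1 ^ 2)
      (q.2.1 • Py + q.2.1 • Py) q := by
    simpa [pow_two, Pi.mul_def] using (hasFDerivAt_y q).mul (hasFDerivAt_y q)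
  have h : HasFDerivAt Qf (q.2.1 • Py + q.2.1 • Py - ((4 * q.1) • Pt + q.2.2 • (4:ℝ) • Px)) q :=
    hy2.sub (((hasFDerivAt_x q).const_mul 4).mul (hasFDerivAt_t q))
  convert h using 1
  ext <;> simp [DQ, Px, Py, Pt] <;> ring

lemma hasFDerivAt_rpowQ (r : ℝ) {q : ℝ × ℝ × ℝ} (hq : 0 < Qf q) :
    HasFDerivAt (fun p => Qf p ^ r) ((r * Qf q ^ (r - 1)) • DQ q) q :=
  (hasFDerivAt_Qf q).rpow_const (Or.inl hq.ne')

lemma isOpen_U : IsOpen {q : ℝ × ℝ × ℝ | 0 < Qf q} := by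
  have : Continuous Qf := by unfold Qf; fun_prop
  exact isOpen_lt continuous_const this


lemma pd_rpowQ (r : ℝ) (v : ℝ × ℝ × ℝ) {q : ℝ × ℝ × ℝ} (hq : 0 < Qf q) :
    pd v (fun p => Qf p ^ r) q = r * Qf q ^ (r - 1) * DQ q v := by
  simp [pd, (hasFDerivAt_rpowQ r hq).fderiv]

lemma pxH_formula {q : ℝ × ℝ × ℝ} (hq : 0 < Qf q) :
    px (fun p => Qf p ^ (-(1/2) : ℝ)) q = 2 * q.2.2 * Qf q ^ (-(3/2) : ℝ) := by
  have h := pd_rpowQ (-(1/2)) (1, 0, 0) hq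
  rw [px, h]
  norm_num
  ring

lemma pyH_formula {q : ℝ × ℝ × ℝ} (hq : 0 < Qf q) :
    py (fun p => Qf p ^ (-(1/2) : ℝ)) q = -q.2.1 * Qf q ^ (-(3/2) : ℝ) := by
  have h := pd_rpowQ (-(1/2)) (0, 1, 0) hq
  rw [py, h]
  norm_num
  ring

lemma pd_G1 (v : ℝ × ℝ × ℝ) {q : ℝ × ℝ × ℝ} (hq : 0 < Qf q) :
    pd v (fun p => 2 * p.2.2 * Qf p ^ (-(3/2) : ℝ)) q =
      2 * q.2.2 * ((-(3/2)) * Qf q ^ (-(5/2) : ℝ) * DQ q v)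
        + Qf q ^ (-(3/2) : ℝ) * (2 * v.2.2) := by
  have h := (((hasFDerivAt_t q).const_mul 2).mul (hasFDerivAt_rpowQ (-(3/2)) hq)).fderiv
  rw [pd, show (fun p : ℝ × ℝ × ℝ => 2 * p.2.2 * Qf p ^ (-(3/2) : ℝ)) =
    ((fun y : ℝ × ℝ × ℝ => 2 * y.2.2) * fun p => Qf p ^ (-(3/2) : ℝ)) from rfl, h]
  norm_num

lemma pd_G2 (v : ℝ × ℝ × ℝ) {q : ℝ × ℝ × ℝ} (hq : 0 < Qf q) :
    pd v (fun p => -p.2.1 * Qf p ^ (-(3/2) : ℝ)) q =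
      -q.2.1 * ((-(3/2)) * Qf q ^ (-(5/2) : ℝ) * DQ q v)
        + Qf q ^ (-(3/2) : ℝ) * (-v.2.1) := by
  have h := (((hasFDerivAt_y q).neg).mul (hasFDerivAt_rpowQ (-(3/2)) hq)).fderiv
  rw [pd, show (fun p : ℝ × ℝ × ℝ => -p.2.1 * Qf p ^ (-(3/2) : ℝ)) =
    ((-fun p : ℝ × ℝ × ℝ => p.2.1) * fun p => Qf p ^ (-(3/2) : ℝ)) from rfl, h]
  norm_num

end AuxStmt2


/-- The fundamental solution `H = (y² - 4xt)^(-1/2)` satisfies both differential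
constraints `H_{xx} H_y - H_{xy} H_x = 0` and `H_{xt} - H_{yy} = 0` on
`U = {y² - 4xt > 0}`. -/
theorem stmt2 :
    let U : Set (ℝ × ℝ × ℝ) := {q | q.2.1 ^ 2 - 4 * q.1 * q.2.2 > 0}
    let H : ℝ × ℝ × ℝ → ℝ := fun q => (q.2.1 ^ 2 - 4 * q.1 * q.2.2) ^ (-(1 / 2 : ℝ))
    ∀ q ∈ U,
      px (px H) q * py H q - py (px H) q * px H q = 0 ∧
      pt (px H) q - py (py H) q = 0 := by
  intro U H q hq
  have hq' : 0 < Qf q := hq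
  have hH : H = fun p => Qf p ^ (-(1/2) : ℝ) := rfl
  have hnhds : ∀ᶠ p in nhds q, 0 < Qf p := isOpen_U.mem_nhds hq'
  have e1 : px H =ᶠ[nhds q] (fun p => 2 * p.2.2 * Qf p ^ (-(3/2) : ℝ)) := by
    filter_upwards [hnhds] with p hp
    rw [hH]; exact pxH_formula hp
  have e2 : py H =ᶠ[nhds q] (fun p => -p.2.1 * Qf p ^ (-(3/2) : ℝ)) := by
    filter_upwards [hnhds] with p hp
    rw [hH]; exact pyH_formula hp
  have dpx : ∀ v, pd v (px H) q = pd v (fun p => 2 * p.2.2 * Qf p ^ (-(3/2) : ℝ)) q := by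
    intro v; simp only [pd]; rw [e1.fderiv_eq]
  have dpy : ∀ v, pd v (py H) q = pd v (fun p => -p.2.1 * Qf p ^ (-(3/2) : ℝ)) q := by
    intro v; simp only [pd]; rw [e2.fderiv_eq]
  have hxx : px (px H) q = _ := (dpx (1, 0, 0)).trans (pd_G1 (1, 0, 0) hq')
  have hxy : py (px H) q = _ := (dpx (0, 1, 0)).trans (pd_G1 (0, 1, 0) hq')
  have hxt : pt (px H) q = _ := (dpx (0, 0, 1)).trans (pd_G1 (0, 0, 1) hq')
  have hyy : py (py H) q = _ := (dpy (0, 1, 0)).trans (pd_G2 (0, 1, 0) hq')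
  have hx : px H q = 2 * q.2.2 * Qf q ^ (-(3/2) : ℝ) := by rw [hH]; exact pxH_formula hq'
  have hy : py H q = -q.2.1 * Qf q ^ (-(3/2) : ℝ) := by rw [hH]; exact pyH_formula hq'
  have key : Qf q ^ (-(3/2) : ℝ) = (q.2.1 ^ 2 - 4 * q.1 * q.2.2) * Qf q ^ (-(5/2) : ℝ) := by
    rw [show (-(3/2) : ℝ) = 1 + (-(5/2)) by norm_num, Real.rpow_add hq', Real.rpow_one]
    rfl
  constructor
  · rw [hxx, hxy, hx, hy]
    simp only [DQ_apply]
    ring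
  · rw [hxt, hyy]
    simp only [DQ_apply]
    linear_combination 3 * key
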